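/- Let μ be a reconciliation map from (T;t,σ) to S. There is a time-consistent reconciliation map from (T;t,σ) to S if and only if there exists a time map τ_T for T alone satisfying: (T1) for u,v with t(u)=t(v) ∈ {•,⊙}: μ(u)=μ(v) implies τ_T(u)=τ_T(v), and μ(u) ≺_S μ(v) implies τ_T(u) > τ_T(v); (T2) if t(u) ∈ {•,⊙}, t(v) ∈ {□,△} and μ(u) ⪯_S lca_S(σ_{T̄}(v)), then τ_T(u) > τ_T(v); (T3) if (u,v) is a transfer edge and lca_S(σ_{T̄}(u) ∪ σ_{T̄}(v)) ⪯_S lca_S(σ_{T̄}(w)) for some w ∈ V(T), then τ_T(u) > τ_T(w). -/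

import Mathlib

/-- A rooted tree on vertex type `V`, encoded by a parent map.
Edges are directed away from the root; the edge into a non-root vertex `v`
is `(par v, v)`. -/
structure RTree (V : Type*) where
  root : V
  par : V → V
  par_root : par root = root
  par_ne : ∀ v, v ≠ root → par v ≠ v
  reaches : ∀ v, ∃ k, par^[k] v = root

namespace RTree

variable {V : Type*}

/-- `anc T x y` : `x` is a descendant of `y`, i.e. `x ⪯_T y`. -/
def anc (T : RTree V) (x y : V) : Prop := ∃ k, (T.par)^[k] x = y

/-- strict descendant: `x ≺_T y`. -/
def sanc (T : RTree V) (x y : V) : Prop := T.anc x y ∧ x ≠ y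

def IsLeaf (T : RTree V) (v : V) : Prop := ∀ u, T.par u = v → u = v

/-- `x` is a least common ancestor of the set `A`. -/
def IsLca (T : RTree V) (A : Set V) (x : V) : Prop :=
  (∀ a ∈ A, T.anc a x) ∧ ∀ y, (∀ a ∈ A, T.anc a y) → T.anc x y

/-- A time map: strict descendants have strictly larger time stamps. -/
def IsTimeMap (T : RTree V) (τ : V → ℝ) : Prop :=
  ∀ x y, T.sanc x y → τ y < τ x

end RTree

/-- Event labels: speciation `•`, duplication `□`, HGT `△`, leaf `⊙`. -/
inductive Event where
  | spec | dup | hgt | leaf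
deriving DecidableEq

/-- The common setup: a gene tree `T` (vertices `V`) with event labels `t`,
transfer edges `trans` (an edge is recorded by its child endpoint),
a species tree `S` (vertices `W`), the map `sig = σ` assigning to each gene
(leaf of `T`) the species (leaf of `S`) it resides in, and a least common
ancestor function `lca` on the species tree. -/
structure ReconSetup (V W : Type*) where
  T : RTree V
  S : RTree W
  t : V → Event
  trans : Set V
  sig : V → W
  lca : Set W → W
  trans_ne_root : ∀ v ∈ trans, v ≠ T.root
  trans_hgt : ∀ v ∈ trans, t (T.par v) = Event.hgt
  leaf_iff : ∀ v, T.IsLeaf v ↔ t v = Event.leaf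
  sig_leaf : ∀ v, T.IsLeaf v → S.IsLeaf (sig v)
  lca_spec : ∀ A : Set W, A.Nonempty → S.IsLca A (lca A)

/-- lower endpoint of a vertex-or-edge of the species tree
(an edge `(S.par y, y)` is encoded as `Sum.inr y`; a vertex `x` as `Sum.inl x`). -/
def lowPt {W : Type*} : W ⊕ W → W := Sum.elim id id

namespace ReconSetup

variable {V W : Type*}

/-- ancestor order of the forest `T_{E̅}` obtained by deleting transfer edges. -/
def fanc (R : ReconSetup V W) (x y : V) : Prop :=
  ∃ k, (R.T.par)^[k] x = y ∧ ∀ i < k, (R.T.par)^[i] x ∉ R.trans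

def sfanc (R : ReconSetup V W) (x y : V) : Prop := R.fanc x y ∧ x ≠ y

/-- `σ_{T̅}(u)`: the species of the leaves of `T` below `u` in the forest `T_{E̅}`. -/
def sigmaBar (R : ReconSetup V W) (u : V) : Set W :=
  R.sig '' {l | R.T.IsLeaf l ∧ R.fanc l u}

/-- Ancestor order of `S` extended to vertices and edges:
`z ⪯ (x,y) ↔ z ⪯ y`, `(x,y) ⪯ z ↔ x ⪯ z`, `(x,y) ⪯ (a,b) ↔ y ⪯ b`. -/
def extLE (R : ReconSetup V W) : W ⊕ W → W ⊕ W → Prop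
  | Sum.inl a, Sum.inl b => R.S.anc a b
  | Sum.inl a, Sum.inr y => R.S.anc a y
  | Sum.inr y, Sum.inl b => R.S.anc (R.S.par y) b
  | Sum.inr y, Sum.inr z => R.S.anc y z

def extLT (R : ReconSetup V W) (p q : W ⊕ W) : Prop := R.extLE p q ∧ ¬ R.extLE q p

def incomp (R : ReconSetup V W) (p q : W ⊕ W) : Prop := ¬ R.extLE p q ∧ ¬ R.extLE q p

def IsDupHGT (R : ReconSetup V W) (u : V) : Prop :=
  R.t u = Event.dup ∨ R.t u = Event.hgt

/-- (M1) leaf constraint. -/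
def M1 (R : ReconSetup V W) (μ : V → W ⊕ W) : Prop :=
  ∀ u, R.T.IsLeaf u → μ u = Sum.inl (R.sig u)

/-- (M2i) speciation vertices map to the lca of the species below them. -/
def M2i (R : ReconSetup V W) (μ : V → W ⊕ W) : Prop :=
  ∀ u, R.t u = Event.spec → μ u = Sum.inl (R.lca (R.sigmaBar u))

/-- (M2ii) duplication/HGT vertices map to edges of `S`. -/
def M2ii (R : ReconSetup V W) (μ : V → W ⊕ W) : Prop :=
  ∀ u, R.IsDupHGT u → ∃ y, y ≠ R.S.root ∧ μ u = Sum.inr y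

/-- (M2iii) the endpoints of a transfer edge receive incomparable images. -/
def M2iii (R : ReconSetup V W) (μ : V → W ⊕ W) : Prop :=
  ∀ v ∈ R.trans, R.incomp (μ (R.T.par v)) (μ v)

/-- (M3) ancestor constraint within components of `T_{E̅}`. -/
def M3 (R : ReconSetup V W) (μ : V → W ⊕ W) : Prop :=
  ∀ v w, R.sfanc v w →
    ((R.IsDupHGT v ∧ R.IsDupHGT w) → R.extLE (μ v) (μ w)) ∧
    (¬ (R.IsDupHGT v ∧ R.IsDupHGT w) → R.extLT (μ v) (μ w))

/-- `μ` is a reconciliation map from `(T;t,σ)` to `S`. -/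
def IsRecon (R : ReconSetup V W) (μ : V → W ⊕ W) : Prop :=
  R.M1 μ ∧ R.M2i μ ∧ R.M2ii μ ∧ R.M2iii μ ∧ R.M3 μ

/-- (O1) every internal vertex has at least two children. -/
def O1 (R : ReconSetup V W) : Prop :=
  ∀ v, ¬ R.T.IsLeaf v →
    ∃ a b, a ≠ b ∧ R.T.par a = v ∧ R.T.par b = v ∧ a ≠ v ∧ b ≠ v

/-- (O2) every HGT vertex has a transfer child edge and a non-transfer child edge. -/
def O2 (R : ReconSetup V W) : Prop :=
  ∀ v, R.t v = Event.hgt →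
    (∃ c, R.T.par c = v ∧ c ∈ R.trans) ∧ (∃ c, R.T.par c = v ∧ c ≠ v ∧ c ∉ R.trans)

/-- (Σ1) a speciation vertex has two children whose species sets are disjoint. -/
def Sigma1 (R : ReconSetup V W) : Prop :=
  ∀ x, R.t x = Event.spec →
    ∃ v w, v ≠ w ∧ R.T.par v = x ∧ R.T.par w = x ∧ v ≠ x ∧ w ≠ x ∧
      R.sigmaBar v ∩ R.sigmaBar w = ∅

/-- (Σ2) the species sets across a transfer edge are disjoint. -/
def Sigma2 (R : ReconSetup V W) : Prop :=
  ∀ w ∈ R.trans, R.sigmaBar (R.T.par w) ∩ R.sigmaBar w = ∅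

/-- the gene tree is binary. -/
def BinaryT (R : ReconSetup V W) : Prop :=
  ∀ v, ¬ R.T.IsLeaf v →
    ∃ a b, a ≠ b ∧ ∀ c, (R.T.par c = v ∧ c ≠ v) ↔ (c = a ∨ c = b)

/-- the species tree is binary. -/
def BinaryS (R : ReconSetup V W) : Prop :=
  ∀ v, ¬ R.S.IsLeaf v →
    ∃ a b, a ≠ b ∧ ∀ c, (R.S.par c = v ∧ c ≠ v) ↔ (c = a ∨ c = b)

/-- (C1) speciation vertices and leaves get the same time as their image. -/
def C1 (R : ReconSetup V W) (μ : V → W ⊕ W) (τT : V → ℝ) (τS : W → ℝ) : Prop :=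
  ∀ u x, (R.t u = Event.spec ∨ R.t u = Event.leaf) → μ u = Sum.inl x → τT u = τS x

/-- (C2) a vertex mapped into an edge `(x,y)` gets a time strictly between
the times of `x` and `y`. -/
def C2 (R : ReconSetup V W) (μ : V → W ⊕ W) (τT : V → ℝ) (τS : W → ℝ) : Prop :=
  ∀ u y, R.IsDupHGT u → μ u = Sum.inr y → τS (R.S.par y) < τT u ∧ τT u < τS y

/-- `μ` is a time-consistent reconciliation map. -/
def TimeConsistent (R : ReconSetup V W) (μ : V → W ⊕ W) : Prop :=
  ∃ τT τS, R.T.IsTimeMap τT ∧ R.S.IsTimeMap τS ∧ R.C1 μ τT τS ∧ R.C2 μ τT τS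

/-- (D1). -/
def D1 (R : ReconSetup V W) (μ : V → W ⊕ W) (τT : V → ℝ) (τS : W → ℝ) : Prop :=
  ∀ u x, μ u = Sum.inl x → τT u = τS x

/-- (D2). -/
def D2 (R : ReconSetup V W) (τT : V → ℝ) (τS : W → ℝ) : Prop :=
  ∀ u x, R.IsDupHGT u → R.S.anc x (R.lca (R.sigmaBar u)) → τT u < τS x

/-- (D3), for a transfer edge `(T.par v, v)` with `v ∈ trans`. -/
def D3 (R : ReconSetup V W) (τT : V → ℝ) (τS : W → ℝ) : Prop :=
  ∀ v x, v ∈ R.trans →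
    R.S.anc (R.lca (R.sigmaBar (R.T.par v) ∪ R.sigmaBar v)) x → τS x < τT (R.T.par v)

/-- The DTL-scenario axioms (I)-(IV) for a map `γ : V(T) → V(S)`. -/
def DTL (R : ReconSetup V W) (γ : V → W) : Prop :=
  (∀ u, R.T.IsLeaf u → γ u = R.sig u) ∧
  (∀ u v w, v ≠ w → R.T.par v = u → R.T.par w = u → v ≠ u → w ≠ u →
    ((¬ R.S.sanc (γ u) (γ v) ∧ ¬ R.S.sanc (γ u) (γ w)) ∧
     (R.S.anc (γ v) (γ u) ∨ R.S.anc (γ w) (γ u)))) ∧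
  (∀ v, v ≠ R.T.root →
    (v ∈ R.trans ↔ (¬ R.S.anc (γ (R.T.par v)) (γ v) ∧ ¬ R.S.anc (γ v) (γ (R.T.par v))))) ∧
  (∀ u v w, v ≠ w → R.T.par v = u → R.T.par w = u → v ≠ u → w ≠ u →
    ((R.t u = Event.hgt ↔ (v ∈ R.trans ∨ w ∈ R.trans)) ∧
     (R.t u = Event.spec →
       γ u = R.lca {γ v, γ w} ∧ ¬ R.S.anc (γ v) (γ w) ∧ ¬ R.S.anc (γ w) (γ v)) ∧
     (R.t u = Event.dup → R.S.anc (R.lca {γ v, γ w}) (γ u))))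

end ReconSetup

/-- A directed graph (relation) is acyclic: no edge closes a directed cycle. -/
def Acyclic {α : Type*} (r : α → α → Prop) : Prop :=
  ∀ x y, r x y → ¬ Relation.ReflTransGen r y x


/-! ### Auxiliary lemmas on rooted trees -/

namespace RTree

variable {V : Type*} {T : RTree V}

attribute [local instance] Classical.propDecidable

lemma iterate_par_root (T : RTree V) : ∀ k, (T.par)^[k] T.root = T.root := by
  intro k
  induction k with
  | zero => rfl
  | succ n ih => rw [Function.iterate_succ_apply', ih, T.par_root]

lemma anc_refl (T : RTree V) (x : V) : T.anc x x := ⟨0, rfl⟩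

lemma anc_par (T : RTree V) (x : V) : T.anc x (T.par x) := ⟨1, rfl⟩

lemma anc_trans {x y z : V} (h1 : T.anc x y) (h2 : T.anc y z) : T.anc x z := by
  obtain ⟨k, hk⟩ := h1
  obtain ⟨j, hj⟩ := h2
  exact ⟨j + k, by rw [Function.iterate_add_apply, hk, hj]⟩

lemma anc_root (T : RTree V) (x : V) : T.anc x T.root := T.reaches x

lemma eq_root_of_anc_root {x : V} (h : T.anc T.root x) : x = T.root := by
  obtain ⟨k, hk⟩ := h
  rw [iterate_par_root] at hk
  exact hk.symm

lemma eq_root_of_iterate_fixed {x : V} {n : ℕ} (h : (T.par)^[n] x = x) (hn : 0 < n) :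
    x = T.root := by
  obtain ⟨m, hm⟩ := T.reaches x
  have hiter : ∀ j : ℕ, (T.par)^[j * n] x = x := by
    intro j
    induction j with
    | zero => simp
    | succ i ih =>
      rw [show (i + 1) * n = i * n + n from by ring, Function.iterate_add_apply, h, ih]
  have h1 : m ≤ m * n := Nat.le_mul_of_pos_right m hn
  have h2 : (T.par)^[m * n] x = x := hiter m
  rw [show m * n = (m * n - m) + m from (Nat.sub_add_cancel h1).symm,
    Function.iterate_add_apply, hm, iterate_par_root] at h2
  exact h2.symm

lemma anc_antisymm {x y : V} (h1 : T.anc x y) (h2 : T.anc y x) : x = y := by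
  obtain ⟨k, hk⟩ := h1
  obtain ⟨j, hj⟩ := h2
  rcases Nat.eq_zero_or_pos (j + k) with h0 | hpos
  · have : k = 0 := by omega
    rw [this] at hk; exact hk
  · have hfix : (T.par)^[j + k] x = x := by
      rw [Function.iterate_add_apply, hk, hj]
    have hx := eq_root_of_iterate_fixed hfix hpos
    subst hx
    rw [iterate_par_root] at hk
    exact hk

lemma anc_step {x y : V} (h : T.anc x y) (hne : x ≠ y) : T.anc (T.par x) y := by
  obtain ⟨k, hk⟩ := h
  cases k with
  | zero => exact absurd hk hne
  | succ n => exact ⟨n, by rw [← Function.iterate_succ_apply]; exact hk⟩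

lemma anc_parTarget {x y : V} (h : T.anc x y) : T.anc x (T.par y) := by
  obtain ⟨k, hk⟩ := h
  exact ⟨k + 1, by rw [Function.iterate_succ_apply', hk]⟩

lemma anc_total {x a b : V} (h1 : T.anc x a) (h2 : T.anc x b) :
    T.anc a b ∨ T.anc b a := by
  obtain ⟨j, hj⟩ := h1
  obtain ⟨k, hk⟩ := h2
  rcases le_total j k with h | h
  · left
    refine ⟨k - j, ?_⟩
    rw [← hj, ← Function.iterate_add_apply, Nat.sub_add_cancel h, hk]
  · right
    refine ⟨j - k, ?_⟩
    rw [← hk, ← Function.iterate_add_apply, Nat.sub_add_cancel h, hj]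

lemma IsLeaf.eq_of_anc {l x : V} (hl : T.IsLeaf l) (h : T.anc x l) : x = l := by
  obtain ⟨k, hk⟩ := h
  induction k generalizing x with
  | zero => exact hk
  | succ n ih =>
    rw [Function.iterate_succ_apply'] at hk
    exact ih (hl _ hk)

noncomputable def depth (T : RTree V) (x : V) : ℕ := Nat.find (T.reaches x)

lemma depth_spec (T : RTree V) (x : V) : (T.par)^[T.depth x] x = T.root :=
  Nat.find_spec (T.reaches x)

lemma depth_pos {x : V} (hx : x ≠ T.root) : 0 < T.depth x := by
  rcases Nat.eq_zero_or_pos (T.depth x) with h | h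
  · exfalso; apply hx
    have := depth_spec T x
    rw [h] at this
    exact this
  · exact h

lemma depth_par {x : V} (hx : x ≠ T.root) : T.depth (T.par x) + 1 = T.depth x := by
  have hpos := depth_pos hx
  have h1 : T.depth (T.par x) ≤ T.depth x - 1 := by
    apply Nat.find_min'
    have := depth_spec T x
    rw [show T.depth x = (T.depth x - 1) + 1 from by omega,
      Function.iterate_succ_apply] at this
    exact this
  have h2 : T.depth x ≤ T.depth (T.par x) + 1 := by
    apply Nat.find_min'
    rw [Function.iterate_succ_apply]
    exact depth_spec T (T.par x)
  omega

lemma depth_lt_of_sanc {x y : V} (h : T.anc x y) (hne : x ≠ y) :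
    T.depth y < T.depth x := by
  obtain ⟨k, hk⟩ := h
  induction k generalizing x with
  | zero => exact absurd hk hne
  | succ n ih =>
    have hxroot : x ≠ T.root := by
      rintro rfl
      exact hne (by rw [iterate_par_root] at hk; exact hk)
    rw [Function.iterate_succ_apply] at hk
    rcases eq_or_ne (T.par x) y with he | hne2
    · rw [← he]
      have := depth_par hxroot
      omega
    · have := ih hne2 hk
      have h2 := depth_par hxroot
      omega

lemma anc_depth_le {x y : V} (h : T.anc x y) : T.depth y ≤ T.depth x := by
  rcases eq_or_ne x y with rfl | hne
  · exact le_refl _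
  · exact (depth_lt_of_sanc h hne).le

lemma isTimeMap_of_edges {τ : V → ℝ} (h : ∀ c, c ≠ T.root → τ (T.par c) < τ c) :
    T.IsTimeMap τ := by
  rintro x y ⟨⟨k, hk⟩, hne⟩
  induction k generalizing x with
  | zero => exact absurd hk hne
  | succ n ih =>
    have hxroot : x ≠ T.root := by
      rintro rfl
      exact hne (by rw [iterate_par_root] at hk; exact hk)
    rw [Function.iterate_succ_apply] at hk
    rcases eq_or_ne (T.par x) y with he | hne2
    · rw [← he]; exact h x hxroot
    · exact (ih _ hne2 hk).trans (h x hxroot)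

lemma IsTimeMap.anc_le {τ : V → ℝ} (hτ : T.IsTimeMap τ) {x y : V} (h : T.anc x y) :
    τ y ≤ τ x := by
  rcases eq_or_ne x y with rfl | hne
  · exact le_refl _
  · exact (hτ x y ⟨h, hne⟩).le

end RTree

/-! ### Auxiliary lemmas on reconciliation setups -/

namespace ReconSetup

open RTree

variable {V W : Type*} {R : ReconSetup V W}

lemma fanc_refl (R : ReconSetup V W) (x : V) : R.fanc x x :=
  ⟨0, rfl, by intro i hi; omega⟩

lemma fanc_step {c u : V} (h : R.T.par c = u) (hc : c ∉ R.trans) : R.fanc c u := by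
  refine ⟨1, h, ?_⟩
  intro i hi
  have : i = 0 := by omega
  subst this
  exact hc

lemma fanc_trans {x y z : V} (h1 : R.fanc x y) (h2 : R.fanc y z) : R.fanc x z := by
  obtain ⟨k, hk, hkc⟩ := h1
  obtain ⟨j, hj, hjc⟩ := h2
  refine ⟨j + k, by rw [Function.iterate_add_apply, hk, hj], ?_⟩
  intro i hi
  rcases lt_or_ge i k with h | h
  · exact hkc i h
  · have : (R.T.par)^[i] x = (R.T.par)^[i - k] y := by
      rw [← hk, ← Function.iterate_add_apply, Nat.sub_add_cancel h]
    rw [this]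
    exact hjc (i - k) (by omega)

lemma fanc_anc {x y : V} (h : R.fanc x y) : R.T.anc x y := by
  obtain ⟨k, hk, -⟩ := h
  exact ⟨k, hk⟩

lemma mem_sigmaBar_self {l : V} (hl : R.T.IsLeaf l) : R.sig l ∈ R.sigmaBar l :=
  ⟨l, ⟨hl, fanc_refl R l⟩, rfl⟩

lemma sigmaBar_leaf {l : V} (hl : R.T.IsLeaf l) : R.sigmaBar l = {R.sig l} := by
  apply Set.eq_singleton_iff_unique_mem.mpr
  refine ⟨mem_sigmaBar_self hl, ?_⟩
  rintro s ⟨l', ⟨hl', hf⟩, rfl⟩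
  rw [hl.eq_of_anc (fanc_anc hf)]

lemma sigmaBar_mono {v w : V} (h : R.fanc v w) : R.sigmaBar v ⊆ R.sigmaBar w := by
  rintro s ⟨l, ⟨hl, hf⟩, rfl⟩
  exact ⟨l, ⟨hl, fanc_trans hf h⟩, rfl⟩

lemma lca_anc {A : Set W} (hA : A.Nonempty) {a : W} (ha : a ∈ A) :
    R.S.anc a (R.lca A) := (R.lca_spec A hA).1 a ha

lemma lca_min {A : Set W} (hA : A.Nonempty) {y : W} (hy : ∀ a ∈ A, R.S.anc a y) :
    R.S.anc (R.lca A) y := (R.lca_spec A hA).2 y hy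

lemma lca_singleton (R : ReconSetup V W) (s : W) : R.lca {s} = s := by
  have hA : ({s} : Set W).Nonempty := ⟨s, rfl⟩
  have h1 : R.S.anc s (R.lca {s}) := lca_anc hA rfl
  have h2 : R.S.anc (R.lca {s}) s := lca_min hA (by
    rintro a ha
    rw [Set.mem_singleton_iff] at ha
    subst ha
    exact R.S.anc_refl a)
  exact anc_antisymm h2 h1

/-- `ℓ(u) = lca_S(σ_{T̄}(u))`. -/
def ell (R : ReconSetup V W) (u : V) : W := R.lca (R.sigmaBar u)

/-- `z(v) = lca_S(σ_{T̄}(par v) ∪ σ_{T̄}(v))` for a transfer edge with child `v`. -/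
def ztop (R : ReconSetup V W) (v : V) : W :=
  R.lca (R.sigmaBar (R.T.par v) ∪ R.sigmaBar v)

lemma sigmaBar_nonempty [Fintype V] (hO1 : R.O1) (hO2 : R.O2) :
    ∀ u, (R.sigmaBar u).Nonempty := by
  have key : ∀ n u, Set.ncard {x | R.T.anc x u} ≤ n → (R.sigmaBar u).Nonempty := by
    intro n
    induction n with
    | zero =>
      intro u h
      exfalso
      have hu : u ∈ {x | R.T.anc x u} := R.T.anc_refl u
      have := (Set.ncard_pos (Set.toFinite _)).mpr ⟨u, hu⟩
      omega
    | succ n ih =>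
      intro u h
      by_cases hl : R.T.IsLeaf u
      · exact ⟨R.sig u, mem_sigmaBar_self hl⟩
      · have hchild : ∃ c, R.T.par c = u ∧ c ≠ u ∧ c ∉ R.trans := by
          by_cases ht : R.t u = Event.hgt
          · obtain ⟨c, hc1, hc2, hc3⟩ := (hO2 u ht).2
            exact ⟨c, hc1, hc2, hc3⟩
          · obtain ⟨a, b, hab, ha, hb, hau, hbu⟩ := hO1 u hl
            refine ⟨a, ha, hau, fun hmem => ht ?_⟩
            rw [← ha]
            exact R.trans_hgt a hmem
        obtain ⟨c, hc1, hc2, hc3⟩ := hchild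
        have hss : {x | R.T.anc x c} ⊂ {x | R.T.anc x u} := by
          constructor
          · intro x hx
            exact anc_trans hx ⟨1, hc1⟩
          · intro hsub
            have : R.T.anc u c := hsub (R.T.anc_refl u)
            exact hc2 (anc_antisymm ⟨1, hc1⟩ this)
        have hcard := Set.ncard_lt_ncard hss (Set.toFinite _)
        obtain ⟨s, l, ⟨hl', hf⟩, rfl⟩ := ih c (by omega)
        exact ⟨R.sig l, l, ⟨hl', fanc_trans hf (fanc_step hc1 hc3)⟩, rfl⟩
  exact fun u => key _ u le_rfl

lemma ell_anc (hne : ∀ u, (R.sigmaBar u).Nonempty) {u : V} {s : W}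
    (hs : s ∈ R.sigmaBar u) : R.S.anc s (R.ell u) :=
  lca_anc (hne u) hs

lemma ell_min (hne : ∀ u, (R.sigmaBar u).Nonempty) {u : V} {y : W}
    (hy : ∀ s ∈ R.sigmaBar u, R.S.anc s y) :
    R.S.anc (R.ell u) y := lca_min (hne u) hy

lemma ell_mono (hne : ∀ u, (R.sigmaBar u).Nonempty) {v w : V} (h : R.fanc v w) :
    R.S.anc (R.ell v) (R.ell w) :=
  ell_min hne (fun s hs => ell_anc hne (sigmaBar_mono h hs))

lemma anc_ztop_left (hne : ∀ u, (R.sigmaBar u).Nonempty) (v : V) :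
    R.S.anc (R.ell (R.T.par v)) (R.ztop v) :=
  ell_min hne (fun s hs =>
    lca_anc ((hne (R.T.par v)).mono Set.subset_union_left) (Or.inl hs))

lemma anc_ztop_right (hne : ∀ u, (R.sigmaBar u).Nonempty) (v : V) :
    R.S.anc (R.ell v) (R.ztop v) :=
  ell_min hne (fun s hs =>
    lca_anc ((hne (R.T.par v)).mono Set.subset_union_left) (Or.inr hs))

lemma ztop_min (hne : ∀ u, (R.sigmaBar u).Nonempty) {v : V} {y : W}
    (h1 : R.S.anc (R.ell (R.T.par v)) y)
    (h2 : R.S.anc (R.ell v) y) : R.S.anc (R.ztop v) y := by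
  apply lca_min ((hne (R.T.par v)).mono Set.subset_union_left)
  rintro s (hs | hs)
  · exact anc_trans (ell_anc hne hs) h1
  · exact anc_trans (ell_anc hne hs) h2

lemma ell_leaf {l : V} (hl : R.T.IsLeaf l) : R.ell l = R.sig l := by
  rw [ell, sigmaBar_leaf hl, lca_singleton]

lemma not_dupHGT_iff (u : V) :
    ¬ R.IsDupHGT u ↔ (R.t u = Event.spec ∨ R.t u = Event.leaf) := by
  cases h : R.t u <;> simp [IsDupHGT, h]

lemma mu_of_L {ν : V → W ⊕ W} (hν : R.IsRecon ν) {u : V}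
    (hu : R.t u = Event.spec ∨ R.t u = Event.leaf) : ν u = Sum.inl (R.ell u) := by
  rcases hu with hu | hu
  · exact hν.2.1 u hu
  · have hl : R.T.IsLeaf u := (R.leaf_iff u).mpr hu
    rw [hν.1 u hl, ell_leaf hl]

lemma F4 {ν : V → W ⊕ W} (hν : R.IsRecon ν) (hne : ∀ u, (R.sigmaBar u).Nonempty)
    (u : V) : R.S.anc (R.ell u) (lowPt (ν u)) := by
  apply ell_min hne
  rintro s ⟨l, ⟨hl, hf⟩, rfl⟩
  rcases eq_or_ne l u with rfl | hlu
  · rw [hν.1 l hl]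
    exact R.S.anc_refl _
  · have hM3 := (hν.2.2.2.2 l u ⟨hf, hlu⟩).2
    have hnd : ¬ R.IsDupHGT l := by
      rw [not_dupHGT_iff]
      exact Or.inr ((R.leaf_iff l).mp hl)
    have hlt := hM3 (fun h => hnd h.1)
    have hle := hlt.1
    rw [hν.1 l hl] at hle
    cases hq : ν u with
    | inl b => rw [hq] at hle; exact hle
    | inr y => rw [hq] at hle; exact hle

lemma incomp_not_anc_lowPt {p q : W ⊕ W} (h : R.incomp p q) :
    ¬ R.S.anc (lowPt p) (lowPt q) := by
  intro hanc
  cases p with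
  | inl a =>
    cases q with
    | inl b => exact h.1 hanc
    | inr y => exact h.1 hanc
  | inr y =>
    cases q with
    | inl b =>
      rcases eq_or_ne y b with rfl | hne
      · exact h.2 (R.S.anc_refl y)
      · exact h.1 (anc_step hanc hne)
    | inr y' => exact h.1 hanc

lemma no_common_desc {ν : V → W ⊕ W} (hν : R.IsRecon ν) {v : V} (hv : v ∈ R.trans)
    {c : W} (h1 : R.S.anc c (lowPt (ν (R.T.par v)))) (h2 : R.S.anc c (lowPt (ν v))) :
    False := by
  have hinc := hν.2.2.2.1 v hv
  rcases anc_total h1 h2 with h | h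
  · exact incomp_not_anc_lowPt hinc h
  · exact incomp_not_anc_lowPt ⟨hinc.2, hinc.1⟩ h

lemma F5a {ν : V → W ⊕ W} (hν : R.IsRecon ν) (hne : ∀ u, (R.sigmaBar u).Nonempty)
    {v : V} (hv : v ∈ R.trans) : ¬ R.S.anc (R.ztop v) (R.ell v) := by
  intro h
  exact no_common_desc hν hv (F4 hν hne (R.T.par v))
    (anc_trans (anc_trans (anc_ztop_left hne v) h) (F4 hν hne v))

lemma F5b {ν : V → W ⊕ W} (hν : R.IsRecon ν) (hne : ∀ u, (R.sigmaBar u).Nonempty)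
    {v : V} (hv : v ∈ R.trans) : ¬ R.S.anc (R.ztop v) (R.ell (R.T.par v)) := by
  intro h
  exact no_common_desc hν hv
    (anc_trans (anc_trans (anc_ztop_right hne v) h) (F4 hν hne (R.T.par v)))
    (F4 hν hne v)

lemma F6 {ν : V → W ⊕ W} (hν : R.IsRecon ν) (hne : ∀ u, (R.sigmaBar u).Nonempty)
    {u : V} (hu : R.IsDupHGT u) : R.ell u ≠ R.S.root := by
  obtain ⟨y, hyne, hy⟩ := hν.2.2.1 u hu
  have h4 := F4 hν hne u
  rw [hy] at h4
  intro h
  rw [h] at h4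
  exact hyne (eq_root_of_anc_root h4)

lemma F7 (hS1 : R.Sigma1) (hne : ∀ u, (R.sigmaBar u).Nonempty) {u : V}
    (hu : R.t u = Event.spec) : ¬ R.S.IsLeaf (R.ell u) := by
  obtain ⟨v, w, hvw, hv, hw, hvu, hwu, hdisj⟩ := hS1 u hu
  have hvtrans : v ∉ R.trans := fun hm => by
    have := R.trans_hgt v hm
    rw [hv, hu] at this
    exact Event.noConfusion this
  have hwtrans : w ∉ R.trans := fun hm => by
    have := R.trans_hgt w hm
    rw [hw, hu] at this
    exact Event.noConfusion this
  obtain ⟨s1, hs1⟩ := hne v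
  obtain ⟨s2, hs2⟩ := hne w
  have hs1u : s1 ∈ R.sigmaBar u := sigmaBar_mono (fanc_step hv hvtrans) hs1
  have hs2u : s2 ∈ R.sigmaBar u := sigmaBar_mono (fanc_step hw hwtrans) hs2
  intro hleaf
  have e1 : s1 = R.ell u := hleaf.eq_of_anc (ell_anc hne hs1u)
  have e2 : s2 = R.ell u := hleaf.eq_of_anc (ell_anc hne hs2u)
  have : s1 ∈ R.sigmaBar v ∩ R.sigmaBar w := ⟨hs1, by rw [e1, ← e2]; exact hs2⟩
  rw [hdisj] at this
  exact this

end ReconSetup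

namespace ReconSetup

open RTree

variable {V W : Type*} {R : ReconSetup V W}

lemma extLE_inl_inl {a b : W} : R.extLE (Sum.inl a) (Sum.inl b) = R.S.anc a b := rfl
lemma extLE_inl_inr {a y : W} : R.extLE (Sum.inl a) (Sum.inr y) = R.S.anc a y := rfl
lemma extLE_inr_inl {y b : W} :
    R.extLE (Sum.inr y) (Sum.inl b) = R.S.anc (R.S.par y) b := rfl
lemma extLE_inr_inr {y y' : W} : R.extLE (Sum.inr y) (Sum.inr y') = R.S.anc y y' := rfl

lemma lowPt_inl (a : W) : lowPt (Sum.inl a : W ⊕ W) = a := rfl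
lemma lowPt_inr (y : W) : lowPt (Sum.inr y : W ⊕ W) = y := rfl

/-- Forward direction of Statement 15. -/
lemma stmt15_forward [Fintype V] (μ : V → W ⊕ W) (hrec : R.IsRecon μ)
    (hO1 : R.O1) (hO2 : R.O2)
    (μ' : V → W ⊕ W) (hrec' : R.IsRecon μ') (htc : R.TimeConsistent μ') :
    ∃ τT : V → ℝ, R.T.IsTimeMap τT ∧
      (∀ u v, (R.t u = Event.spec ∨ R.t u = Event.leaf) → R.t u = R.t v →
        ((μ u = μ v → τT u = τT v) ∧ (R.extLT (μ u) (μ v) → τT v < τT u))) ∧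
      (∀ u v, (R.t u = Event.spec ∨ R.t u = Event.leaf) → R.IsDupHGT v →
        R.extLE (μ u) (Sum.inl (R.lca (R.sigmaBar v))) → τT v < τT u) ∧
      (∀ v w, v ∈ R.trans →
        R.S.anc (R.lca (R.sigmaBar (R.T.par v) ∪ R.sigmaBar v))
                (R.lca (R.sigmaBar w)) → τT w < τT (R.T.par v)) := by
  obtain ⟨τT, τS, hτT, hτS, hC1, hC2⟩ := htc
  have hne := sigmaBar_nonempty hO1 hO2 (R := R)
  refine ⟨τT, hτT, ?_, ?_, ?_⟩
  · -- (T1)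
    intro u v hu huv
    have hv : R.t v = Event.spec ∨ R.t v = Event.leaf := huv ▸ hu
    have hμu : μ u = Sum.inl (R.ell u) := mu_of_L hrec hu
    have hμv : μ v = Sum.inl (R.ell v) := mu_of_L hrec hv
    have hτu : τT u = τS (R.ell u) := hC1 u _ hu (mu_of_L hrec' hu)
    have hτv : τT v = τS (R.ell v) := hC1 v _ hv (mu_of_L hrec' hv)
    constructor
    · intro he
      rw [hμu, hμv] at he
      have : R.ell u = R.ell v := Sum.inl.inj he
      rw [hτu, hτv, this]
    · intro hlt
      rw [hμu, hμv] at hlt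
      have h1 : R.S.anc (R.ell u) (R.ell v) := by
        have := hlt.1; rw [extLE_inl_inl] at this; exact this
      have h2 : R.ell u ≠ R.ell v := by
        intro h
        exact hlt.2 (by rw [extLE_inl_inl, h]; exact R.S.anc_refl _)
      rw [hτu, hτv]
      exact hτS _ _ ⟨h1, h2⟩
  · -- (T2)
    intro u v hu hv hle
    rw [mu_of_L hrec hu, extLE_inl_inl] at hle
    obtain ⟨y, hyne, hy⟩ := hrec'.2.2.1 v hv
    have h2 := (hC2 v y hv hy).2
    have hF4 : R.S.anc (R.ell v) y := by
      have := F4 hrec' hne v; rw [hy, lowPt_inr] at this; exact this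
    have hτu : τT u = τS (R.ell u) := hC1 u _ hu (mu_of_L hrec' hu)
    have l1 : τS y ≤ τS (R.ell v) := hτS.anc_le hF4
    have l2 : τS (R.ell v) ≤ τS (R.ell u) := hτS.anc_le hle
    linarith
  · -- (T3)
    intro v w hv hanc
    have hanc' : R.S.anc (R.ztop v) (R.ell w) := hanc
    have hpvD : R.IsDupHGT (R.T.par v) := Or.inr (R.trans_hgt v hv)
    obtain ⟨y, hyne, hy⟩ := hrec'.2.2.1 (R.T.par v) hpvD
    have hC2pv := hC2 (R.T.par v) y hpvD hy
    have h1 : R.S.anc (R.ell (R.T.par v)) y := by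
      have := F4 hrec' hne (R.T.par v); rw [hy, lowPt_inr] at this; exact this
    have h2 : R.S.anc (R.ell (R.T.par v)) (R.ztop v) := anc_ztop_left hne v
    have hcase : ¬ R.S.anc (R.ztop v) y := by
      intro hzy
      refine no_common_desc hrec' hv (c := R.ell v) ?_ (F4 hrec' hne v)
      rw [hy, lowPt_inr]
      exact anc_trans (anc_ztop_right hne v) hzy
    have hyz : R.S.anc y (R.ztop v) := (anc_total h1 h2).resolve_right hcase
    have hynez : y ≠ R.ztop v := by
      intro h
      exact hcase (h ▸ R.S.anc_refl y)
    have hpar : R.S.anc (R.S.par y) (R.ztop v) := anc_step hyz hynez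
    have hw : τT w ≤ τS (R.ell w) := by
      by_cases hD : R.IsDupHGT w
      · obtain ⟨yw, _, hyw⟩ := hrec'.2.2.1 w hD
        have hlt := (hC2 w yw hD hyw).2
        have h4 : R.S.anc (R.ell w) yw := by
          have := F4 hrec' hne w; rw [hyw, lowPt_inr] at this; exact this
        have := hτS.anc_le h4
        linarith
      · rw [not_dupHGT_iff] at hD
        exact le_of_eq (hC1 w _ hD (mu_of_L hrec' hD))
    have l1 : τS (R.ell w) ≤ τS (R.ztop v) := hτS.anc_le hanc'
    have l2 : τS (R.ztop v) ≤ τS (R.S.par y) := hτS.anc_le hpar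
    have l3 := hC2pv.1
    linarith

end ReconSetup

/-! ### The potential / topological-value construction for the backward direction -/

namespace Stmt15B

open RTree ReconSetup

attribute [local instance] Classical.propDecidable

variable {V W : Type*}

/-- The "witness family" of a species vertex `x`. -/
def Fam (R : ReconSetup V W) (x : W) : Set V :=
  {c | (R.IsDupHGT c ∧ ¬ R.IsDupHGT (R.T.par c) ∧ R.S.anc (R.ell (R.T.par c)) x) ∨
       (c ∈ R.trans ∧ R.S.anc (R.ztop c) x)}

/-- Primary potential. -/
noncomputable def P (R : ReconSetup V W) (τT : V → ℝ) : V ⊕ W → EReal :=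
  Sum.elim (fun u => ((τT u : ℝ) : EReal))
    (fun x => if x = R.S.root then ⊥
      else sInf ((fun c => ((τT (R.T.par c) : ℝ) : EReal)) '' Fam R x))

/-- Secondary potential (depth in `S`; `⊤` for gene-tree nodes). -/
noncomputable def dd (R : ReconSetup V W) : V ⊕ W → WithTop ℕ :=
  Sum.elim (fun _ => (⊤ : WithTop ℕ)) (fun x => ((R.S.depth x : ℕ) : WithTop ℕ))

noncomputable def key (R : ReconSetup V W) (τT : V → ℝ) [Fintype V] [Fintype W] :
    V ⊕ W → Lex (EReal × Lex ((WithTop ℕ) × ℕ)) :=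
  fun n => toLex (P R τT n, toLex (dd R n, ((Fintype.equivFin (V ⊕ W)) n : ℕ)))

noncomputable def val (R : ReconSetup V W) (τT : V → ℝ) [Fintype V] [Fintype W] :
    V ⊕ W → ℝ :=
  fun n => (Set.ncard {m | key R τT m < key R τT n} : ℝ)

variable {R : ReconSetup V W} {τT : V → ℝ} [Fintype V] [Fintype W]

lemma key_lt_of_P {a b : V ⊕ W} (h : P R τT a < P R τT b) : key R τT a < key R τT b := by
  simp only [key]
  rw [Prod.Lex.lt_iff]
  exact Or.inl h

lemma key_lt_of_P_le {a b : V ⊕ W} (h1 : P R τT a ≤ P R τT b) (h2 : dd R a < dd R b) :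
    key R τT a < key R τT b := by
  simp only [key]
  rw [Prod.Lex.lt_iff]
  rcases lt_or_eq_of_le h1 with h | h
  · exact Or.inl h
  · refine Or.inr ⟨h, ?_⟩
    rw [Prod.Lex.lt_iff]
    exact Or.inl h2

lemma key_injective : Function.Injective (key R τT) := by
  intro a b hab
  have := congrArg (fun k => (ofLex (ofLex k).2).2) hab
  simpa using (Fintype.equivFin (V ⊕ W)).injective (Fin.val_injective this)

lemma val_lt {a b : V ⊕ W} (h : key R τT a < key R τT b) : val R τT a < val R τT b := by
  have hss : {m | key R τT m < key R τT a} ⊂ {m | key R τT m < key R τT b} := by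
    constructor
    · intro m hm
      exact hm.trans h
    · intro hsub
      exact lt_irrefl (key R τT a) (hsub (Set.mem_setOf.mpr h))
  have := Set.ncard_lt_ncard hss (Set.toFinite _)
  simp only [val]
  exact_mod_cast this

lemma val_ne {a b : V ⊕ W} (h : a ≠ b) : val R τT a ≠ val R τT b := by
  have hk : key R τT a ≠ key R τT b := fun he => h (key_injective he)
  rcases lt_or_gt_of_ne hk with hlt | hlt
  · exact (val_lt hlt).ne
  · exact (val_lt hlt).ne'

lemma P_inl (u : V) : P R τT (Sum.inl u) = ((τT u : ℝ) : EReal) := rfl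

lemma P_inr_root : P R τT (Sum.inr R.S.root) = ⊥ := by
  simp [P]

lemma P_inr_of_ne {x : W} (hx : x ≠ R.S.root) :
    P R τT (Sum.inr x) = sInf ((fun c => ((τT (R.T.par c) : ℝ) : EReal)) '' Fam R x) := by
  simp [P, hx]

lemma P_bot_lt {x : W} (hx : x ≠ R.S.root) : (⊥ : EReal) < P R τT (Sum.inr x) := by
  rw [P_inr_of_ne hx]
  rcases Set.eq_empty_or_nonempty (Fam R x) with he | hn
  · rw [he]
    simp
  · have himg : ((fun c => ((τT (R.T.par c) : ℝ) : EReal)) '' Fam R x).Nonempty :=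
      hn.image _
    have hfin : ((fun c => ((τT (R.T.par c) : ℝ) : EReal)) '' Fam R x).Finite :=
      (Set.Finite.image _ (Set.toFinite _))
    obtain ⟨c, hc, heq⟩ := himg.csInf_mem hfin
    rw [← heq]
    exact EReal.bot_lt_coe _

lemma P_le_of_mem {x : W} (hx : x ≠ R.S.root) {c : V} (hc : c ∈ Fam R x) :
    P R τT (Sum.inr x) ≤ ((τT (R.T.par c) : ℝ) : EReal) := by
  rw [P_inr_of_ne hx]
  exact sInf_le ⟨c, hc, rfl⟩

lemma Fam_mono {x x' : W} (h : R.S.anc x x') : Fam R x ⊆ Fam R x' := by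
  rintro c (⟨h1, h2, h3⟩ | ⟨h1, h2⟩)
  · exact Or.inl ⟨h1, h2, RTree.anc_trans h3 h⟩
  · exact Or.inr ⟨h1, RTree.anc_trans h2 h⟩

lemma P_mono {x x' : W} (h : R.S.anc x x') (hx : x ≠ R.S.root) (hx' : x' ≠ R.S.root) :
    P R τT (Sum.inr x') ≤ P R τT (Sum.inr x) := by
  rw [P_inr_of_ne hx, P_inr_of_ne hx']
  exact sInf_le_sInf (Set.image_mono (Fam_mono h))

lemma P_lt_of_forall {x : W} (hx : x ≠ R.S.root) {t0 : ℝ}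
    (h : ∀ c ∈ Fam R x, t0 < τT (R.T.par c)) :
    ((t0 : ℝ) : EReal) < P R τT (Sum.inr x) := by
  rw [P_inr_of_ne hx]
  rcases Set.eq_empty_or_nonempty (Fam R x) with he | hn
  · rw [he]
    simp only [Set.image_empty, sInf_empty]
    exact EReal.coe_lt_top t0
  · have himg : ((fun c => ((τT (R.T.par c) : ℝ) : EReal)) '' Fam R x).Nonempty :=
      hn.image _
    have hfin : ((fun c => ((τT (R.T.par c) : ℝ) : EReal)) '' Fam R x).Finite :=
      (Set.Finite.image _ (Set.toFinite _))
    obtain ⟨c, hc, heq⟩ := himg.csInf_mem hfin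
    rw [← heq]
    simpa using EReal.coe_lt_coe_iff.mpr (h c hc)

/-- The vertex-to-node map of the gene tree. -/
noncomputable def node (R : ReconSetup V W) : V → V ⊕ W := fun v =>
  if R.IsDupHGT v then Sum.inl v else Sum.inr (R.ell v)

lemma node_of_D {v : V} (h : R.IsDupHGT v) : node R v = Sum.inl v := if_pos h
lemma node_of_L {v : V} (h : ¬ R.IsDupHGT v) : node R v = Sum.inr (R.ell v) := if_neg h

noncomputable def tauS (R : ReconSetup V W) (τT : V → ℝ) [Fintype V] [Fintype W] :
    W → ℝ := fun x => val R τT (Sum.inr x)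

noncomputable def tauT (R : ReconSetup V W) (τT : V → ℝ) [Fintype V] [Fintype W] :
    V → ℝ := fun v => val R τT (node R v)

end Stmt15B

namespace ReconSetup

open RTree Stmt15B

variable {V W : Type*}

lemma stmt15_backward [Fintype V] [Fintype W] {R : ReconSetup V W} (μ : V → W ⊕ W)
    (hrec : R.IsRecon μ) (hO1 : R.O1) (hO2 : R.O2) (hS1 : R.Sigma1) (hS2 : R.Sigma2)
    (τT : V → ℝ) (hτ : R.T.IsTimeMap τT)
    (hT1 : ∀ u v, (R.t u = Event.spec ∨ R.t u = Event.leaf) → R.t u = R.t v →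
        ((μ u = μ v → τT u = τT v) ∧ (R.extLT (μ u) (μ v) → τT v < τT u)))
    (hT2 : ∀ u v, (R.t u = Event.spec ∨ R.t u = Event.leaf) → R.IsDupHGT v →
        R.extLE (μ u) (Sum.inl (R.lca (R.sigmaBar v))) → τT v < τT u)
    (hT3 : ∀ v w, v ∈ R.trans →
        R.S.anc (R.lca (R.sigmaBar (R.T.par v) ∪ R.sigmaBar v)) (R.lca (R.sigmaBar w)) →
        τT w < τT (R.T.par v)) :
    ∃ μ', R.IsRecon μ' ∧ R.TimeConsistent μ' := by
  classical
  have hne := sigmaBar_nonempty hO1 hO2 (R := R)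
  have hF6 : ∀ u, R.IsDupHGT u → R.ell u ≠ R.S.root := fun u hu => F6 hrec hne hu
  have hF5a : ∀ v ∈ R.trans, ¬ R.S.anc (R.ztop v) (R.ell v) := fun v hv => F5a hrec hne hv
  -- strict bounds on family members
  have hFamD : ∀ (u : V), R.IsDupHGT u → ∀ c ∈ Fam R (R.ell u), τT u < τT (R.T.par c) := by
    intro u hu c hc
    rcases hc with ⟨hcD, hcL, hanc⟩ | ⟨hcTr, hanc⟩
    · have hw : R.t (R.T.par c) = Event.spec ∨ R.t (R.T.par c) = Event.leaf :=
        (not_dupHGT_iff _).mp hcL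
      apply hT2 (R.T.par c) u hw hu
      rw [mu_of_L hrec hw, extLE_inl_inl]
      exact hanc
    · exact hT3 c u hcTr hanc
  have hFamL : ∀ (c : V), ¬ R.IsDupHGT c → c ≠ R.T.root → R.IsDupHGT (R.T.par c) →
      ∀ c' ∈ Fam R (R.ell c), τT (R.T.par c) < τT (R.T.par c') := by
    intro c hcL hcroot hpD c' hc'
    have hcw : R.t c = Event.spec ∨ R.t c = Event.leaf := (not_dupHGT_iff _).mp hcL
    have hedge : τT (R.T.par c) < τT c :=
      hτ c (R.T.par c) ⟨R.T.anc_par c, (R.T.par_ne c hcroot).symm⟩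
    by_cases hcT : c ∈ R.trans
    · rcases hc' with ⟨h1D, h1L, h1anc⟩ | ⟨h1T, h1anc⟩
      · have hnl : ¬ R.T.IsLeaf (R.T.par c') := by
          intro hl
          have he := hl c' rfl
          rw [← he] at h1L
          exact h1L h1D
        have hw' : R.t (R.T.par c') = Event.spec := by
          rcases (not_dupHGT_iff _).mp h1L with h | h
          · exact h
          · exact absurd ((R.leaf_iff _).mpr h) hnl
        rcases hcw with hcs | hcl
        · rcases eq_or_ne (R.ell (R.T.par c')) (R.ell c) with he | hne2
          · have heq : μ (R.T.par c') = μ c := by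
              rw [mu_of_L hrec (Or.inl hw'), mu_of_L hrec (Or.inl hcs), he]
            have := (hT1 (R.T.par c') c (Or.inl hw') (by rw [hw', hcs])).1 heq
            linarith
          · have hlt : R.extLT (μ (R.T.par c')) (μ c) := by
              rw [mu_of_L hrec (Or.inl hw'), mu_of_L hrec (Or.inl hcs)]
              refine ⟨by rw [extLE_inl_inl]; exact h1anc, ?_⟩
              rw [extLE_inl_inl]
              intro hh
              exact hne2 (anc_antisymm h1anc hh)
            have := (hT1 (R.T.par c') c (Or.inl hw') (by rw [hw', hcs])).2 hlt
            linarith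
        · exfalso
          have hcleaf : R.T.IsLeaf c := (R.leaf_iff c).mpr hcl
          have hSleaf : R.S.IsLeaf (R.ell c) := by
            rw [ell_leaf hcleaf]
            exact R.sig_leaf c hcleaf
          have he := hSleaf.eq_of_anc h1anc
          exact F7 hS1 hne hw' (by rw [he]; exact hSleaf)
      · have := hT3 c' c h1T h1anc
        linarith
    · have hmono : R.S.anc (R.ell c) (R.ell (R.T.par c)) := ell_mono hne (fanc_step rfl hcT)
      rcases hc' with ⟨h1D, h1L, h1anc⟩ | ⟨h1T, h1anc⟩
      · have hw : R.t (R.T.par c') = Event.spec ∨ R.t (R.T.par c') = Event.leaf :=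
          (not_dupHGT_iff _).mp h1L
        apply hT2 _ _ hw hpD
        rw [mu_of_L hrec hw, extLE_inl_inl]
        exact anc_trans h1anc hmono
      · exact hT3 c' (R.T.par c) h1T (anc_trans h1anc hmono)
  -- key monotonicity along all constraint edges
  have K1 : ∀ x : W, x ≠ R.S.root →
      key R τT (Sum.inr (R.S.par x)) < key R τT (Sum.inr x) := by
    intro x hx
    by_cases hpr : R.S.par x = R.S.root
    · apply key_lt_of_P
      rw [hpr, P_inr_root]
      exact P_bot_lt hx
    · apply key_lt_of_P_le (P_mono (R.S.anc_par x) hx hpr)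
      simp only [dd, Sum.elim_inr]
      exact_mod_cast (show R.S.depth (R.S.par x) < R.S.depth x by
        have := R.S.depth_par hx; omega)
  have K4root : ∀ u : V, key R τT (Sum.inr R.S.root) < key R τT (Sum.inl u) := by
    intro u
    apply key_lt_of_P
    rw [P_inr_root, P_inl]
    exact EReal.bot_lt_coe _
  have K3 : ∀ u, R.IsDupHGT u →
      key R τT (Sum.inl u) < key R τT (Sum.inr (R.ell u)) := by
    intro u hu
    apply key_lt_of_P
    rw [P_inl]
    exact P_lt_of_forall (hF6 u hu) (hFamD u hu)
  have K5 : ∀ v ∈ R.trans,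
      key R τT (Sum.inr (R.ztop v)) < key R τT (Sum.inl (R.T.par v)) := by
    intro v hv
    by_cases hz : R.ztop v = R.S.root
    · apply key_lt_of_P
      rw [hz, P_inr_root, P_inl]
      exact EReal.bot_lt_coe _
    · apply key_lt_of_P_le
      · rw [P_inl]
        exact P_le_of_mem hz (Or.inr ⟨hv, R.S.anc_refl _⟩)
      · simp only [dd, Sum.elim_inr, Sum.elim_inl]
        exact WithTop.coe_lt_top _
  have K2 : ∀ c, c ≠ R.T.root →
      key R τT (node R (R.T.par c)) < key R τT (node R c) := by
    intro c hc
    have hedge : τT (R.T.par c) < τT c :=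
      hτ c (R.T.par c) ⟨R.T.anc_par c, (R.T.par_ne c hc).symm⟩
    by_cases hpD : R.IsDupHGT (R.T.par c) <;> by_cases hcD : R.IsDupHGT c
    · rw [node_of_D hpD, node_of_D hcD]
      apply key_lt_of_P
      rw [P_inl, P_inl]
      exact_mod_cast hedge
    · rw [node_of_D hpD, node_of_L hcD]
      have hcell : R.ell c ≠ R.S.root := by
        by_cases hcT : c ∈ R.trans
        · intro h
          exact hF5a c hcT (by rw [h]; exact R.S.anc_root _)
        · intro h
          apply hF6 _ hpD
          have hmono := ell_mono hne (fanc_step rfl hcT)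
          rw [h] at hmono
          exact eq_root_of_anc_root hmono
      apply key_lt_of_P
      rw [P_inl]
      exact P_lt_of_forall hcell (hFamL c hcD hc hpD)
    · rw [node_of_L hpD, node_of_D hcD]
      by_cases hpe : R.ell (R.T.par c) = R.S.root
      · apply key_lt_of_P
        rw [hpe, P_inr_root, P_inl]
        exact EReal.bot_lt_coe _
      · apply key_lt_of_P
        rw [P_inl]
        calc P R τT (Sum.inr (R.ell (R.T.par c)))
            ≤ ((τT (R.T.par c) : ℝ) : EReal) :=
              P_le_of_mem hpe (Or.inl ⟨hcD, hpD, R.S.anc_refl _⟩)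
          _ < ((τT c : ℝ) : EReal) := by exact_mod_cast hedge
    · rw [node_of_L hpD, node_of_L hcD]
      have hcT : c ∉ R.trans := by
        intro hm
        exact hpD (Or.inr (R.trans_hgt c hm))
      have hM3 := (hrec.2.2.2.2 c (R.T.par c)
        ⟨fanc_step rfl hcT, (R.T.par_ne c hc).symm⟩).2 (fun h => hcD h.1)
      rw [mu_of_L hrec ((not_dupHGT_iff _).mp hcD),
          mu_of_L hrec ((not_dupHGT_iff _).mp hpD)] at hM3
      have hanc : R.S.anc (R.ell c) (R.ell (R.T.par c)) := by
        have := hM3.1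
        rw [extLE_inl_inl] at this
        exact this
      have hnee : R.ell c ≠ R.ell (R.T.par c) := by
        intro h
        exact hM3.2 (by rw [extLE_inl_inl, h]; exact R.S.anc_refl _)
      by_cases hpe : R.ell (R.T.par c) = R.S.root
      · apply key_lt_of_P
        rw [hpe, P_inr_root]
        exact P_bot_lt (fun h => hnee (h.trans hpe.symm))
      · have hce : R.ell c ≠ R.S.root := by
          intro h
          rw [h] at hanc
          exact hpe (eq_root_of_anc_root hanc)
        apply key_lt_of_P_le (P_mono hanc hce hpe)
        simp only [dd, Sum.elim_inr]
        exact_mod_cast depth_lt_of_sanc hanc hnee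
  -- real-valued layer
  have vK1 : ∀ x, x ≠ R.S.root → tauS R τT (R.S.par x) < tauS R τT x :=
    fun x hx => val_lt (K1 x hx)
  have hSmap : R.S.IsTimeMap (tauS R τT) := isTimeMap_of_edges vK1
  have vK2 : ∀ c, c ≠ R.T.root → tauT R τT (R.T.par c) < tauT R τT c :=
    fun c hc => val_lt (K2 c hc)
  have hTmap : R.T.IsTimeMap (tauT R τT) := isTimeMap_of_edges vK2
  have htL : ∀ u, ¬ R.IsDupHGT u → tauT R τT u = tauS R τT (R.ell u) := by
    intro u hu
    show val R τT (node R u) = _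
    rw [node_of_L hu]
    rfl
  have htD : ∀ u, R.IsDupHGT u → tauT R τT u = val R τT (Sum.inl u) := by
    intro u hu
    show val R τT (node R u) = _
    rw [node_of_D hu]
  have vUp : ∀ u, R.IsDupHGT u → tauT R τT u < tauS R τT (R.ell u) := by
    intro u hu
    rw [htD u hu]
    exact val_lt (K3 u hu)
  have vRoot : ∀ u, R.IsDupHGT u → tauS R τT R.S.root < tauT R τT u := by
    intro u hu
    rw [htD u hu]
    exact val_lt (K4root u)
  have vZ : ∀ v ∈ R.trans, tauS R τT (R.ztop v) < tauT R τT (R.T.par v) := by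
    intro v hv
    have hpD : R.IsDupHGT (R.T.par v) := Or.inr (R.trans_hgt v hv)
    rw [htD _ hpD]
    exact val_lt (K5 v hv)
  have vGen : ∀ u x, R.IsDupHGT u → tauT R τT u ≠ tauS R τT x := by
    intro u x hu
    rw [htD u hu]
    exact val_ne (by simp)
  -- threshold edges for dup/HGT vertices
  have thr : ∀ u, ∃ y, R.IsDupHGT u →
      R.S.anc (R.ell u) y ∧ tauS R τT (R.S.par y) < tauT R τT u ∧
      tauT R τT u < tauS R τT y := by
    intro u
    by_cases hu : R.IsDupHGT u
    · have main : ∀ n x, R.S.depth x ≤ n → tauT R τT u < tauS R τT x →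
          ∃ y, R.S.anc x y ∧ tauS R τT (R.S.par y) < tauT R τT u ∧
          tauT R τT u < tauS R τT y := by
        intro n
        induction n with
        | zero =>
          intro x hx hlt
          exfalso
          have h0 : R.S.depth x = 0 := Nat.le_zero.mp hx
          have hxr : x = R.S.root := by
            have := R.S.depth_spec x
            rw [h0] at this
            simpa using this
          rw [hxr] at hlt
          exact absurd hlt (not_lt.mpr (vRoot u hu).le)
        | succ n ih =>
          intro x hx hlt
          by_cases hcase : tauS R τT (R.S.par x) < tauT R τT u
          · exact ⟨x, R.S.anc_refl x, hcase, hlt⟩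
          · have hxr : x ≠ R.S.root := by
              rintro rfl
              exact absurd hlt (not_lt.mpr (vRoot u hu).le)
            have hlt2 : tauT R τT u < tauS R τT (R.S.par x) :=
              lt_of_le_of_ne (not_lt.mp hcase) (vGen u _ hu)
            have hdep : R.S.depth (R.S.par x) ≤ n := by
              have := R.S.depth_par hxr
              omega
            obtain ⟨y, h1, h2, h3⟩ := ih (R.S.par x) hdep hlt2
            exact ⟨y, anc_trans (R.S.anc_par x) h1, h2, h3⟩
      obtain ⟨y, h1, h2, h3⟩ := main (R.S.depth (R.ell u)) (R.ell u) le_rfl (vUp u hu)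
      exact ⟨y, fun _ => ⟨h1, h2, h3⟩⟩
    · exact ⟨R.S.root, fun h => absurd h hu⟩
  choose Y hY using thr
  have hYanc : ∀ v, R.IsDupHGT v → R.S.anc (R.ell v) (Y v) := fun v hv => (hY v hv).1
  have hYlow : ∀ v, R.IsDupHGT v → tauS R τT (R.S.par (Y v)) < tauT R τT v :=
    fun v hv => (hY v hv).2.1
  have hYhigh : ∀ v, R.IsDupHGT v → tauT R τT v < tauS R τT (Y v) :=
    fun v hv => (hY v hv).2.2
  have hYroot : ∀ v, R.IsDupHGT v → Y v ≠ R.S.root := by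
    intro v hv h
    have h1 := hYlow v hv
    have h2 := hYhigh v hv
    rw [h, R.S.par_root] at h1
    rw [h] at h2
    linarith
  -- the new reconciliation map
  set μ' : V → W ⊕ W := fun v => if R.IsDupHGT v then Sum.inr (Y v) else Sum.inl (R.ell v)
    with hμ'def
  have hμ'D : ∀ v, R.IsDupHGT v → μ' v = Sum.inr (Y v) := fun v hv => if_pos hv
  have hμ'L : ∀ v, ¬ R.IsDupHGT v → μ' v = Sum.inl (R.ell v) := fun v hv => if_neg hv
  have hM1 : R.M1 μ' := by
    intro u hu
    have hL : ¬ R.IsDupHGT u := (not_dupHGT_iff u).mpr (Or.inr ((R.leaf_iff u).mp hu))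
    rw [hμ'L u hL, ell_leaf hu]
  have hM2i : R.M2i μ' := by
    intro u hu
    rw [hμ'L u ((not_dupHGT_iff u).mpr (Or.inl hu))]
    rfl
  have hM2ii : R.M2ii μ' := fun u hu => ⟨Y u, hYroot u hu, hμ'D u hu⟩
  have hM2iii : R.M2iii μ' := by
    intro v hv
    have hpD : R.IsDupHGT (R.T.par v) := Or.inr (R.trans_hgt v hv)
    have hvroot : v ≠ R.T.root := R.trans_ne_root v hv
    have hzlt := vZ v hv
    rw [hμ'D _ hpD]
    by_cases hvD : R.IsDupHGT v
    · rw [hμ'D v hvD]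
      refine ⟨?_, ?_⟩
      · rw [extLE_inr_inr]
        intro h
        have hzY : R.S.anc (R.ztop v) (Y v) :=
          ztop_min hne (anc_trans (hYanc _ hpD) h) (hYanc v hvD)
        have l1 := hSmap.anc_le hzY
        have l2 := vK2 v hvroot
        have l3 := hYhigh v hvD
        linarith
      · rw [extLE_inr_inr]
        intro h
        have hzY : R.S.anc (R.ztop v) (Y (R.T.par v)) :=
          ztop_min hne (hYanc _ hpD) (anc_trans (hYanc v hvD) h)
        have l1 := hSmap.anc_le hzY
        have l2 := hYhigh _ hpD
        linarith
    · rw [hμ'L v hvD]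
      refine ⟨?_, ?_⟩
      · rw [extLE_inr_inl]
        intro h
        have h2 : R.S.anc (R.ell (R.T.par v)) (R.ell v) :=
          anc_trans (anc_parTarget (hYanc _ hpD)) h
        exact hF5a v hv (ztop_min hne h2 (R.S.anc_refl _))
      · rw [extLE_inl_inr]
        intro h
        have hzY : R.S.anc (R.ztop v) (Y (R.T.par v)) := ztop_min hne (hYanc _ hpD) h
        have l1 := hSmap.anc_le hzY
        have l2 := hYhigh _ hpD
        linarith
  have hM3 : R.M3 μ' := by
    intro v w hvw
    have hsanc : R.T.sanc v w := ⟨fanc_anc hvw.1, hvw.2⟩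
    have htlt : tauT R τT w < tauT R τT v := hTmap v w hsanc
    have hellm : R.S.anc (R.ell v) (R.ell w) := ell_mono hne hvw.1
    constructor
    · rintro ⟨hvD, hwD⟩
      rw [hμ'D v hvD, hμ'D w hwD, extLE_inr_inr]
      rcases anc_total (hYanc v hvD) (anc_trans hellm (hYanc w hwD)) with h | h
      · exact h
      · rcases eq_or_ne (Y w) (Y v) with he | hne2
        · rw [he]
          exact R.S.anc_refl _
        · exfalso
          have hstep : R.S.anc (R.S.par (Y w)) (Y v) := anc_step h hne2
          have l1 := hSmap.anc_le hstep
          have l2 := hYlow w hwD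
          have l3 := hYhigh v hvD
          linarith
    · intro hnb
      by_cases hvD : R.IsDupHGT v
      · have hwL : ¬ R.IsDupHGT w := fun hwD => hnb ⟨hvD, hwD⟩
        rw [hμ'D v hvD, hμ'L w hwL]
        have hτw : tauT R τT w = tauS R τT (R.ell w) := htL w hwL
        have hneq : Y v ≠ R.ell w := by
          intro he
          have h3 := hYhigh v hvD
          rw [he, ← hτw] at h3
          linarith
        have hanc2 : R.S.anc (Y v) (R.ell w) := by
          rcases anc_total (hYanc v hvD) hellm with h | h
          · exact h
          · exfalso
            have h4 : tauS R τT (Y v) < tauS R τT (R.ell w) :=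
              hSmap _ _ ⟨h, fun hh => hneq hh.symm⟩
            have h5 := hYhigh v hvD
            rw [hτw] at htlt
            linarith
        refine ⟨?_, ?_⟩
        · rw [extLE_inr_inl]
          exact anc_step hanc2 hneq
        · rw [extLE_inl_inr]
          intro hh
          exact hneq (anc_antisymm hanc2 hh)
      · rw [hμ'L v hvD]
        by_cases hwD : R.IsDupHGT w
        · rw [hμ'D w hwD]
          refine ⟨?_, ?_⟩
          · rw [extLE_inl_inr]
            exact anc_trans hellm (hYanc w hwD)
          · rw [extLE_inr_inl]
            intro hh
            have l1 := hSmap.anc_le hh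
            have l2 := hYlow w hwD
            have l3 := htL v hvD
            linarith
        · rw [hμ'L w hwD]
          have hM3mu := (hrec.2.2.2.2 v w hvw).2 hnb
          rw [mu_of_L hrec ((not_dupHGT_iff v).mp hvD),
              mu_of_L hrec ((not_dupHGT_iff w).mp hwD)] at hM3mu
          exact hM3mu
  have hC1 : R.C1 μ' (tauT R τT) (tauS R τT) := by
    intro u x hu hx
    have hL : ¬ R.IsDupHGT u := (not_dupHGT_iff u).mpr hu
    rw [hμ'L u hL] at hx
    have he : x = R.ell u := (Sum.inl.inj hx).symm
    rw [he, htL u hL]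
  have hC2 : R.C2 μ' (tauT R τT) (tauS R τT) := by
    intro u y hu hy
    rw [hμ'D u hu] at hy
    have he : y = Y u := (Sum.inr.inj hy).symm
    rw [he]
    exact ⟨hYlow u hu, hYhigh u hu⟩
  exact ⟨μ', ⟨hM1, hM2i, hM2ii, hM2iii, hM3⟩,
    tauT R τT, tauS R τT, hTmap, hSmap, hC1, hC2⟩

end ReconSetup
/-- given a reconciliation map `μ`, there is a time-consistent
reconciliation map from `(T;t,σ)` to `S` iff there is a time map `τ_T` on the
gene tree alone satisfying (T1), (T2), (T3). -/
theorem stmt15 {V W : Type*} [Fintype V] [Fintype W]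
    (R : ReconSetup V W) (μ : V → W ⊕ W) (hrec : R.IsRecon μ)
    (hO1 : R.O1) (hO2 : R.O2) (hS1 : R.Sigma1) (hS2 : R.Sigma2) :
    (∃ μ', R.IsRecon μ' ∧ R.TimeConsistent μ') ↔
    ∃ τT : V → ℝ, R.T.IsTimeMap τT ∧
      (∀ u v, (R.t u = Event.spec ∨ R.t u = Event.leaf) → R.t u = R.t v →
        ((μ u = μ v → τT u = τT v) ∧ (R.extLT (μ u) (μ v) → τT v < τT u))) ∧
      (∀ u v, (R.t u = Event.spec ∨ R.t u = Event.leaf) → R.IsDupHGT v →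
        R.extLE (μ u) (Sum.inl (R.lca (R.sigmaBar v))) → τT v < τT u) ∧
      (∀ v w, v ∈ R.trans →
        R.S.anc (R.lca (R.sigmaBar (R.T.par v) ∪ R.sigmaBar v))
                (R.lca (R.sigmaBar w)) → τT w < τT (R.T.par v)) := by
  constructor
  · rintro ⟨μ', h1, h2⟩
    exact ReconSetup.stmt15_forward μ hrec hO1 hO2 μ' h1 h2
  · rintro ⟨τT, hτ, hT1, hT2, hT3⟩
    exact ReconSetup.stmt15_backward μ hrec hO1 hO2 hS1 hS2 τT hτ hT1 hT2 hT3
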